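/- Let M be a stochastic MDP over (S, A), let π be a policy, and let S_π ⊆ S and S^rch ⊆ S be arbitrary subsets; set S^rem = S_π \ S^rch. Define the Markov reward process M^π on state set S_π ∪ {s_⊤, s_⊥} with start state s_⊤ and absorbing state s_⊥ as follows: from s_⊤, the transition probability to a state s' ∈ S_π is the probability that a trajectory of M under π reaches s' without previously visiting any other state of S_π, and the transition probability to s_⊥ is the probability that the trajectory visits no state of S_π at all; from each s ∈ S_π ∩ S^rch lying in layer h, the transition probability to a state s' ∈ S_π lying in a strictly later layer is the probability that the Markov chain under π started at s at layer h reaches s' without visiting any other state of S_π in between, and the transition probability to s_⊥ is the probability that this chain finishes the episode without visiting another state of S_π; from each s ∈ S^rem and from s_⊥, the process transitions to s_⊥ with probability 1. Then for every s ∈ S^rem, the probability that the process M^π started at s_⊤ ever visits s equals d̄^π(s, S^rem), the probability that a trajectory of M under π reaches s without having visited any state of S^rem at any earlier time step. -/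

import Mathlib

open scoped ENNReal Classical

/-- A stochastic MDP over a layered state space `S : ℕ → Type` with action set `A`: an
initial distribution on layer `0` and transition kernels between consecutive layers. -/
structure StoMDP (S : ℕ → Type) (A : Type) where
  init : PMF (S 0)
  step : ∀ h : ℕ, S h → A → PMF (S (h + 1))

/-- `avoidProb M π Sbar h s k t` is the probability that the Markov chain induced by `π` in
`M`, started at state `s` at layer `h`, is at state `t` at layer `h + k` without having
visited any state of `Sbar` at the layers strictly between `h` and `h + k` (states are
recorded as pairs `⟨layer, state⟩`). -/
noncomputable def avoidProb {S : ℕ → Type} {A : Type} [∀ h, Fintype (S h)]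
    (M : StoMDP S A) (π : ∀ h : ℕ, S h → A) (Sbar : Set ((h : ℕ) × S h))
    (h : ℕ) (s : S h) : ∀ k : ℕ, S (h + k) → ℝ≥0∞
  | 0 => fun t => if t = s then 1 else 0
  | k + 1 => fun t =>
      ∑ x : S (h + k),
        avoidProb M π Sbar h s k x *
          (if k = 0 then 1 else if (⟨h + k, x⟩ : (i : ℕ) × S i) ∈ Sbar then 0 else 1) *
          M.step (h + k) x (π (h + k) x) t

/-- `initAvoid M π Sbar h s` is the probability that a trajectory of `M` under `π` reaches
the state `s` at layer `h` without having visited any state of `Sbar` at any strictly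
earlier layer (this is the quantity `d̄^π(s, Sbar)`). -/
noncomputable def initAvoid {S : ℕ → Type} {A : Type} [∀ h, Fintype (S h)]
    (M : StoMDP S A) (π : ∀ h : ℕ, S h → A) (Sbar : Set ((h : ℕ) × S h)) :
    ∀ h : ℕ, S h → ℝ≥0∞
  | 0 => fun s => M.init s
  | h + 1 => fun t =>
      ∑ x : S h,
        initAvoid M π Sbar h x *
          (if (⟨h, x⟩ : (i : ℕ) × S i) ∈ Sbar then 0 else 1) *
          M.step h x (π h x) t

lemma tsum_sum_type {α β : Type} (f : α ⊕ β → ℝ≥0∞) :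
    ∑' x, f x = ∑' a, f (Sum.inl a) + ∑' b, f (Sum.inr b) := by
  rw [← (Equiv.sumEquivSigmaBool α β).symm.tsum_eq f, ENNReal.tsum_sigma', tsum_bool]
  rfl

section AP
variable {S : ℕ → Type} {A : Type} [∀ h, Fintype (S h)]
  (M : StoMDP S A) (π : ∀ h : ℕ, S h → A)

lemma avoidProb_cast (T : Set ((h : ℕ) × S h)) (h : ℕ) (s : S h) {k k' : ℕ} (e : k = k')
    (t : S (h + k)) :
    avoidProb M π T h s k t
      = avoidProb M π T h s k' (cast (congrArg (fun n => S (h + n)) e) t) := by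
  subst e; rfl

/-- absolute-layer version of `avoidProb`. -/
noncomputable def AP (T : Set ((h : ℕ) × S h)) (h : ℕ) (s : S h) (m : ℕ) (t : S m) : ℝ≥0∞ :=
  if e : h ≤ m then
    avoidProb M π T h s (m - h) (cast (congrArg S (Nat.add_sub_cancel' e).symm) t)
  else 0


lemma cast_self {α : Sort*} (e : α = α) (a : α) : cast e a = a := rfl

lemma AP_eq_avoidProb (T : Set ((h : ℕ) × S h)) (h : ℕ) (s : S h) (k : ℕ) (t : S (h + k)) :
    AP M π T h s (h + k) t = avoidProb M π T h s k t := by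
  rw [AP, dif_pos (Nat.le_add_right h k),
    avoidProb_cast M π T h s (show h + k - h = k by omega), cast_cast]
  exact congrArg _ (cast_self _ _)

lemma AP_self (T : Set ((h : ℕ) × S h)) (h : ℕ) (s : S h) (t : S h) :
    AP M π T h s h t = if t = s then 1 else 0 :=
  AP_eq_avoidProb M π T h s 0 t

lemma AP_succ (T : Set ((h : ℕ) × S h)) (h : ℕ) (s : S h) (m : ℕ) (hm : h ≤ m) (t : S (m + 1)) :
    AP M π T h s (m + 1) t
      = ∑ x : S m,
          AP M π T h s m x *
            (if m = h then 1 else if (⟨m, x⟩ : (i : ℕ) × S i) ∈ T then 0 else 1) *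
            M.step m x (π m x) t := by
  obtain ⟨k, rfl⟩ := Nat.exists_eq_add_of_le hm
  rw [show AP M π T h s (h + k + 1) t = avoidProb M π T h s (k + 1) t from
    AP_eq_avoidProb M π T h s (k + 1) t]
  show ∑ x : S (h + k), _ = _
  refine Finset.sum_congr rfl fun x _ => ?_
  rw [AP_eq_avoidProb M π T h s k x]
  congr 1
  congr 1
  exact if_congr (by omega) rfl rfl

lemma AP_layer_eq (T : Set ((h : ℕ) × S h)) (x y : (h : ℕ) × S h) (e : x.1 = y.1) :
    AP M π T x.1 x.2 y.1 y.2 = if y = x then 1 else 0 := by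
  obtain ⟨a, b⟩ := x
  obtain ⟨c, d⟩ := y
  dsimp at e ⊢
  subst e
  rw [AP_self]
  by_cases hbd : d = b
  · subst hbd; simp
  · rw [if_neg hbd, if_neg (fun e => hbd (eq_of_heq (Sigma.mk.inj_iff.mp e).2))]

lemma AP_lt (T : Set ((h : ℕ) × S h)) (h : ℕ) (s : S h) (m : ℕ) (hm : m < h) (t : S m) :
    AP M π T h s m t = 0 := by
  rw [AP, dif_neg (by omega)]

lemma AP_step (T : Set ((h : ℕ) × S h)) (m : ℕ) (y : S m) (t : S (m + 1)) :
    AP M π T m y (m + 1) t = M.step m y (π m y) t := by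
  rw [AP_succ M π T m y m le_rfl t]
  rw [Finset.sum_eq_single y]
  · rw [AP_self, if_pos rfl, if_pos rfl]; ring
  · intro b _ hb
    rw [AP_self, if_neg hb]; ring
  · intro hy; exact absurd (Finset.mem_univ y) hy

lemma ind_split (T U : Set ((h : ℕ) × S h)) (hTU : T ⊆ U) (z : (h : ℕ) × S h) :
    (if z ∈ T then (0:ℝ≥0∞) else 1)
      = (if z ∈ U then 0 else 1) + (if z ∈ U ∧ z ∉ T then 1 else 0) := by
  by_cases h1 : z ∈ T
  · have h2 := hTU h1
    simp [h1, h2]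
  · by_cases h2 : z ∈ U <;> simp [h1, h2]


lemma decompAP (T U : Set ((h : ℕ) × S h)) (hTU : T ⊆ U) (h : ℕ) (s : S h) :
    ∀ m, h ≤ m → ∀ t : S m,
    AP M π T h s m t = AP M π U h s m t +
      ∑ i ∈ Finset.Ioo h m, ∑ y : S i,
        (if (⟨i, y⟩ : (j : ℕ) × S j) ∈ U ∧ (⟨i, y⟩ : (j : ℕ) × S j) ∉ T then 1 else 0) *
          AP M π U h s i y * AP M π T i y m t := by
  intro m
  induction m with
  | zero =>
    intro hm t
    have : h = 0 := Nat.le_zero.mp hm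
    subst this
    simp [AP_self]
  | succ m IH =>
    intro hm t
    rcases Nat.lt_or_ge m h with hcase | hcase
    · have : h = m + 1 := by omega
      subst this
      have he : Finset.Ioo (m+1) (m+1) = ∅ := by simp
      simp [he, AP_self]
    · rw [AP_succ M π T h s m hcase t, AP_succ M π U h s m hcase t]
      rcases Nat.eq_or_lt_of_le hcase with heq | hlt
      · subst heq
        have he : Finset.Ioo h (h+1) = ∅ := by ext i; simp
        simp [he, AP_self]
      · have hmh : m ≠ h := by omega
        simp only [if_neg hmh]
        have key : ∀ x : S m,
            AP M π T h s m x * (if (⟨m, x⟩ : (i : ℕ) × S i) ∈ T then (0:ℝ≥0∞) else 1) *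
                M.step m x (π m x) t
            = AP M π U h s m x * (if (⟨m, x⟩ : (i : ℕ) × S i) ∈ U then 0 else 1) *
                M.step m x (π m x) t
              + (if (⟨m, x⟩ : (i : ℕ) × S i) ∈ U ∧ (⟨m, x⟩ : (i : ℕ) × S i) ∉ T then 1 else 0) *
                  AP M π U h s m x * M.step m x (π m x) t
              + ∑ i ∈ Finset.Ioo h m, ∑ y : S i,
                  (if (⟨i, y⟩ : (j : ℕ) × S j) ∈ U ∧ (⟨i, y⟩ : (j : ℕ) × S j) ∉ T then 1 else 0) *
                    AP M π U h s i y *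
                    (AP M π T i y m x * (if (⟨m, x⟩ : (i : ℕ) × S i) ∈ T then 0 else 1) *
                      M.step m x (π m x) t) := by
          intro x
          rw [IH hcase x, ind_split T U hTU]
          rw [add_mul, add_mul]
          congr 1
          · ring
          · rw [Finset.sum_mul, Finset.sum_mul]
            refine Finset.sum_congr rfl fun i _ => ?_
            rw [Finset.sum_mul, Finset.sum_mul]
            refine Finset.sum_congr rfl fun y _ => ?_
            ring
        rw [Finset.sum_congr rfl fun x _ => key x, Finset.sum_add_distrib,
          Finset.sum_add_distrib]
        rw [add_assoc]
        congr 1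
        have hIoo : Finset.Ioo h (m+1) = insert m (Finset.Ioo h m) := by
          ext i; simp only [Finset.mem_Ioo, Finset.mem_insert]; omega
        rw [hIoo, Finset.sum_insert (by simp)]
        congr 1
        · refine Finset.sum_congr rfl fun y _ => ?_
          rw [AP_step M π T m y t]
        · rw [Finset.sum_comm]
          refine Finset.sum_congr rfl fun i hi => ?_
          rw [Finset.sum_comm]
          refine Finset.sum_congr rfl fun y _ => ?_
          have him : i ≤ m := by simp only [Finset.mem_Ioo] at hi; omega
          have hmi : m ≠ i := by simp only [Finset.mem_Ioo] at hi; omega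
          rw [AP_succ M π T i y m him t]
          simp only [if_neg hmi]
          rw [Finset.mul_sum]

lemma decompIA (T U : Set ((h : ℕ) × S h)) (hTU : T ⊆ U) :
    ∀ m, ∀ t : S m,
    initAvoid M π T m t = initAvoid M π U m t +
      ∑ i ∈ Finset.range m, ∑ y : S i,
        (if (⟨i, y⟩ : (j : ℕ) × S j) ∈ U ∧ (⟨i, y⟩ : (j : ℕ) × S j) ∉ T then 1 else 0) *
          initAvoid M π U i y * AP M π T i y m t := by
  intro m
  induction m with
  | zero => intro t; simp [initAvoid]
  | succ m IH =>
    intro t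
    rw [show initAvoid M π T (m+1) t = ∑ x : S m, initAvoid M π T m x *
        (if (⟨m, x⟩ : (i : ℕ) × S i) ∈ T then 0 else 1) * M.step m x (π m x) t from rfl]
    rw [show initAvoid M π U (m+1) t = ∑ x : S m, initAvoid M π U m x *
        (if (⟨m, x⟩ : (i : ℕ) × S i) ∈ U then 0 else 1) * M.step m x (π m x) t from rfl]
    have key : ∀ x : S m,
        initAvoid M π T m x * (if (⟨m, x⟩ : (i : ℕ) × S i) ∈ T then (0:ℝ≥0∞) else 1) *
            M.step m x (π m x) t
        = initAvoid M π U m x * (if (⟨m, x⟩ : (i : ℕ) × S i) ∈ U then 0 else 1) *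
            M.step m x (π m x) t
          + (if (⟨m, x⟩ : (i : ℕ) × S i) ∈ U ∧ (⟨m, x⟩ : (i : ℕ) × S i) ∉ T then 1 else 0) *
              initAvoid M π U m x * M.step m x (π m x) t
          + ∑ i ∈ Finset.range m, ∑ y : S i,
              (if (⟨i, y⟩ : (j : ℕ) × S j) ∈ U ∧ (⟨i, y⟩ : (j : ℕ) × S j) ∉ T then 1 else 0) *
                initAvoid M π U i y *
                (AP M π T i y m x * (if (⟨m, x⟩ : (i : ℕ) × S i) ∈ T then 0 else 1) *
                  M.step m x (π m x) t) := by
      intro x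
      rw [IH x, ind_split T U hTU]
      rw [add_mul, add_mul]
      congr 1
      · ring
      · rw [Finset.sum_mul, Finset.sum_mul]
        refine Finset.sum_congr rfl fun i _ => ?_
        rw [Finset.sum_mul, Finset.sum_mul]
        refine Finset.sum_congr rfl fun y _ => ?_
        ring
    rw [Finset.sum_congr rfl fun x _ => key x, Finset.sum_add_distrib,
      Finset.sum_add_distrib]
    rw [add_assoc]
    congr 1
    rw [Finset.sum_range_succ]
    rw [add_comm ((Finset.range m).sum _)]
    congr 1
    · refine Finset.sum_congr rfl fun y _ => ?_
      rw [AP_step M π T m y t]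
    · rw [Finset.sum_comm]
      refine Finset.sum_congr rfl fun i hi => ?_
      rw [Finset.sum_comm]
      refine Finset.sum_congr rfl fun y _ => ?_
      have him : i ≤ m := by simp only [Finset.mem_range] at hi; omega
      have hmi : m ≠ i := by simp only [Finset.mem_range] at hi; omega
      rw [AP_succ M π T i y m him t]
      simp only [if_neg hmi]
      rw [Finset.mul_sum]

end AP

/-- `tailProb H M π Sp h s`: the probability that the Markov chain under `π`, started at
state `s` at layer `h`, finishes the episode (reaches the last layer `H - 1`) without
visiting any other state of `Sp` after layer `h`. -/
noncomputable def tailProb (H : ℕ) {S : ℕ → Type} {A : Type} [∀ h, Fintype (S h)]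
    (M : StoMDP S A) (π : ∀ h : ℕ, S h → A) (Sp : Set ((h : ℕ) × S h))
    (h : ℕ) (s : S h) : ℝ≥0∞ :=
  ∑ x : S (h + (H - 1 - h)),
    avoidProb M π Sp h s (H - 1 - h) x *
      (if H - 1 - h = 0 then 1
       else if (⟨h + (H - 1 - h), x⟩ : (i : ℕ) × S i) ∈ Sp then 0 else 1)

/-- The state set of the policy-specific Markov reward process `M^π`: the start state `s_⊤`
(`Sum.inl ()`), the internal states (`Sum.inr (Sum.inl q)`, used for the states of
`S_π`), and the absorbing end state `s_⊥` (`Sum.inr (Sum.inr ())`). -/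
abbrev MrpState (S : ℕ → Type) : Type := Unit ⊕ ((h : ℕ) × S h) ⊕ Unit

/-- The transition kernel of the policy-specific Markov reward process `M^π` determined by
the MDP `M`, the policy `π`, the petal states `Sp` and the reachable states `Srch`:
* from `s_⊤` to `q ∈ Sp`: the probability that a trajectory under `π` reaches `q` without
  previously visiting any other state of `Sp`; from `s_⊤` to `s_⊥`: the probability that
  the trajectory visits no state of `Sp` at all;
* from `q ∈ Sp ∩ Srch` to `q' ∈ Sp` at a strictly later layer: the probability that the
  chain under `π` started at `q` reaches `q'` without visiting any other state of `Sp` in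
  between; from `q ∈ Sp ∩ Srch` to `s_⊥`: the probability that this chain finishes the
  episode without visiting another state of `Sp`;
* from every remaining state (in particular every `q ∈ Sp \ Srch`) and from `s_⊥`: to
  `s_⊥` with probability `1`. -/
noncomputable def mrpQ (H : ℕ) {S : ℕ → Type} {A : Type} [∀ h, Fintype (S h)]
    (M : StoMDP S A) (π : ∀ h : ℕ, S h → A) (Sp Srch : Set ((h : ℕ) × S h)) :
    MrpState S → MrpState S → ℝ≥0∞
  | Sum.inl _, Sum.inl _ => 0
  | Sum.inl _, Sum.inr (Sum.inl q) =>
      if q ∈ Sp then initAvoid M π Sp q.1 q.2 else 0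
  | Sum.inl _, Sum.inr (Sum.inr _) =>
      ∑ x : S (H - 1),
        initAvoid M π Sp (H - 1) x *
          (if (⟨H - 1, x⟩ : (i : ℕ) × S i) ∈ Sp then 0 else 1)
  | Sum.inr (Sum.inl _), Sum.inl _ => 0
  | Sum.inr (Sum.inl q), Sum.inr (Sum.inl q') =>
      if hq : q ∈ Sp ∧ q ∈ Srch ∧ q' ∈ Sp ∧ q.1 < q'.1 then
        avoidProb M π Sp q.1 q.2 (q'.1 - q.1)
          (cast (congrArg S (Nat.add_sub_cancel' (Nat.le_of_lt hq.2.2.2))).symm q'.2)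
      else 0
  | Sum.inr (Sum.inl q), Sum.inr (Sum.inr _) =>
      if q ∈ Sp ∧ q ∈ Srch then tailProb H M π Sp q.1 q.2 else 1
  | Sum.inr (Sum.inr _), Sum.inl _ => 0
  | Sum.inr (Sum.inr _), Sum.inr (Sum.inl _) => 0
  | Sum.inr (Sum.inr _), Sum.inr (Sum.inr _) => 1

/-- `hitProb Q target n x`: the probability that the Markov chain with transition kernel `Q`
started at `x` visits the state `target` within `n` steps. -/
noncomputable def hitProb {X : Type} (Q : X → X → ℝ≥0∞) (target : X) : ℕ → X → ℝ≥0∞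
  | 0 => fun x => if x = target then 1 else 0
  | n + 1 => fun x =>
      if x = target then 1 else ∑' y : X, Q x y * hitProb Q target n y

section MRP

variable {S : ℕ → Type} {A : Type} [∀ h, Fintype (S h)]
  (M : StoMDP S A) (π : ∀ h : ℕ, S h → A) (H : ℕ)
  (Sp Srch : Set ((h : ℕ) × S h)) (q : (h : ℕ) × S h)

lemma tsum_unit (f : Unit → ℝ≥0∞) : ∑' u, f u = f () :=
  tsum_eq_single () fun b hb => absurd (Subsingleton.elim b ()) hb

lemma mrpQ_internal (x σ : (h : ℕ) × S h) :
    mrpQ H M π Sp Srch (Sum.inr (Sum.inl x)) (Sum.inr (Sum.inl σ))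
      = if hq : x ∈ Sp ∧ x ∈ Srch ∧ σ ∈ Sp ∧ x.1 < σ.1 then
          AP M π Sp x.1 x.2 σ.1 σ.2 else 0 := by
  show dite _ _ _ = _
  by_cases hc : x ∈ Sp ∧ x ∈ Srch ∧ σ ∈ Sp ∧ x.1 < σ.1
  · rw [dif_pos hc, dif_pos hc, AP, dif_pos (Nat.le_of_lt hc.2.2.2)]
  · rw [dif_neg hc, dif_neg hc]

lemma mrpQ_top (σ : (h : ℕ) × S h) :
    mrpQ H M π Sp Srch (Sum.inl ()) (Sum.inr (Sum.inl σ))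
      = if σ ∈ Sp then initAvoid M π Sp σ.1 σ.2 else 0 := rfl

lemma hit_bot (n : ℕ) :
    hitProb (mrpQ H M π Sp Srch) (Sum.inr (Sum.inl q)) n (Sum.inr (Sum.inr ())) = 0 := by
  induction n with
  | zero => simp [hitProb]
  | succ n IH =>
    simp only [hitProb]
    rw [if_neg (by simp)]
    refine ENNReal.tsum_eq_zero.mpr fun y => ?_
    rcases y with u | σ | u
    · simp [mrpQ]
    · simp [mrpQ]
    · cases u; simp [IH]

lemma hit_tgt (n : ℕ) :
    hitProb (mrpQ H M π Sp Srch) (Sum.inr (Sum.inl q)) n (Sum.inr (Sum.inl q)) = 1 := by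
  cases n <;> simp [hitProb]

lemma hit_rem (n : ℕ) (x : (h : ℕ) × S h) (h1 : x ∉ Srch) (h2 : x ≠ q) :
    hitProb (mrpQ H M π Sp Srch) (Sum.inr (Sum.inl q)) n (Sum.inr (Sum.inl x)) = 0 := by
  induction n with
  | zero => simp [hitProb, h2]
  | succ n IH =>
    simp only [hitProb]
    rw [if_neg (by simp [h2])]
    refine ENNReal.tsum_eq_zero.mpr fun y => ?_
    rcases y with u | σ | u
    · simp [mrpQ]
    · rw [mrpQ_internal, dif_neg (fun hc => h1 hc.2.1)]
      simp
    · cases u; simp [hit_bot]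

lemma hit_ge (n : ℕ) : ∀ x : (h : ℕ) × S h, q.1 ≤ x.1 → x ≠ q →
    hitProb (mrpQ H M π Sp Srch) (Sum.inr (Sum.inl q)) n (Sum.inr (Sum.inl x)) = 0 := by
  induction n with
  | zero => intro x h1 h2; simp [hitProb, h2]
  | succ n IH =>
    intro x h1 h2
    simp only [hitProb]
    rw [if_neg (by simp [h2])]
    refine ENNReal.tsum_eq_zero.mpr fun y => ?_
    rcases y with u | σ | u
    · simp [mrpQ]
    · rw [mrpQ_internal]
      by_cases hc : x ∈ Sp ∧ x ∈ Srch ∧ σ ∈ Sp ∧ x.1 < σ.1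
      · rw [dif_pos hc, IH σ (by omega) (fun e => by subst e; omega)]
        simp
      · rw [dif_neg hc]; simp
    · cases u; simp [hit_bot]

end MRP

section claim
variable {S : ℕ → Type} {A : Type} [∀ h, Fintype (S h)]
  (M : StoMDP S A) (π : ∀ h : ℕ, S h → A) (H : ℕ)
  (Sp Srch : Set ((h : ℕ) × S h)) (q : (h : ℕ) × S h)

lemma hit_claim (hqSp : q ∈ Sp) (hqS : q ∉ Srch) :
    ∀ n : ℕ, ∀ x : (h : ℕ) × S h, x ∈ Sp → x ∈ Srch → q.1 ≤ x.1 + n →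
    hitProb (mrpQ H M π Sp Srch) (Sum.inr (Sum.inl q)) n (Sum.inr (Sum.inl x))
      = if _ : x.1 ≤ q.1 then AP M π (Sp \ Srch) x.1 x.2 q.1 q.2 else 0 := by
  intro n
  induction n with
  | zero =>
    intro x hx1 hx2 hxn
    have hxq : x ≠ q := fun e => hqS (e ▸ hx2)
    by_cases hle : x.1 ≤ q.1
    · have heq : x.1 = q.1 := by omega
      rw [dif_pos hle, AP_layer_eq M π _ x q heq, if_neg (Ne.symm hxq)]
      simp [hitProb, hxq]
    · rw [dif_neg hle]
      simp [hitProb, hxq]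
  | succ n IH =>
    intro x hx1 hx2 hxn
    have hxq : x ≠ q := fun e => hqS (e ▸ hx2)
    by_cases hge : q.1 ≤ x.1
    · rw [hit_ge M π H Sp Srch q (n+1) x hge hxq]
      by_cases hle : x.1 ≤ q.1
      · have heq : x.1 = q.1 := le_antisymm hle hge
        rw [dif_pos hle, AP_layer_eq M π _ x q heq, if_neg (Ne.symm hxq)]
      · rw [dif_neg hle]
    · push_neg at hge
      rw [dif_pos hge.le]
      simp only [hitProb]
      rw [if_neg (by simp [hxq])]
      rw [tsum_sum_type, tsum_sum_type, tsum_unit, tsum_unit, ENNReal.tsum_sigma']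
      simp only [tsum_fintype]
      rw [tsum_eq_sum (s := Finset.Ioc x.1 q.1) ?hsupp]
      case hsupp =>
        intro i hi
        simp only [Finset.mem_Ioc, not_and_or, not_le, not_lt] at hi
        refine Finset.sum_eq_zero fun y _ => ?_
        rw [mrpQ_internal]
        rcases hi with hi | hi
        · rw [dif_neg (fun hc => absurd hc.2.2.2 (by show ¬ x.1 < i; omega))]
          simp
        · rw [hit_ge M π H Sp Srch q n ⟨i, y⟩ (by show q.1 ≤ i; omega)
            (fun e => absurd (congrArg Sigma.fst e) (by show ¬ i = q.1; omega))]
          simp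
      rw [show Finset.Ioc x.1 q.1 = insert q.1 (Finset.Ioo x.1 q.1) from by
        ext i; simp [Finset.mem_Ioc, Finset.mem_Ioo]; omega]
      rw [Finset.sum_insert (by simp)]
      have hFq : (∑ y : S q.1,
          mrpQ H M π Sp Srch (Sum.inr (Sum.inl x)) (Sum.inr (Sum.inl ⟨q.1, y⟩)) *
            hitProb (mrpQ H M π Sp Srch) (Sum.inr (Sum.inl q)) n (Sum.inr (Sum.inl ⟨q.1, y⟩)))
          = AP M π Sp x.1 x.2 q.1 q.2 := by
        rw [Finset.sum_eq_single q.2]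
        · rw [mrpQ_internal, dif_pos ⟨hx1, hx2, hqSp, hge⟩]
          rw [show (⟨q.1, q.2⟩ : (h : ℕ) × S h) = q from rfl, hit_tgt, mul_one]
        · intro y _ hy
          rw [hit_ge M π H Sp Srch q n ⟨q.1, y⟩ le_rfl
            (fun e => hy (eq_of_heq (Sigma.mk.inj_iff.mp e).2)), mul_zero]
        · intro hmem; exact absurd (Finset.mem_univ _) hmem
      have hFi : ∀ i ∈ Finset.Ioo x.1 q.1, (∑ y : S i,
          mrpQ H M π Sp Srch (Sum.inr (Sum.inl x)) (Sum.inr (Sum.inl ⟨i, y⟩)) *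
            hitProb (mrpQ H M π Sp Srch) (Sum.inr (Sum.inl q)) n (Sum.inr (Sum.inl ⟨i, y⟩)))
          = ∑ y : S i,
              (if (⟨i, y⟩ : (j : ℕ) × S j) ∈ Sp ∧ (⟨i, y⟩ : (j : ℕ) × S j) ∉ (Sp \ Srch)
                then 1 else 0) *
                AP M π Sp x.1 x.2 i y * AP M π (Sp \ Srch) i y q.1 q.2 := by
        intro i hi
        simp only [Finset.mem_Ioo] at hi
        refine Finset.sum_congr rfl fun y _ => ?_
        rw [mrpQ_internal]
        by_cases h1 : (⟨i, y⟩ : (j : ℕ) × S j) ∈ Sp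
        · by_cases h2 : (⟨i, y⟩ : (j : ℕ) × S j) ∈ Srch
          · rw [dif_pos ⟨hx1, hx2, h1, hi.1⟩, IH ⟨i, y⟩ h1 h2 (by show q.1 ≤ i + n; omega),
              dif_pos (le_of_lt hi.2), if_pos ⟨h1, fun hmem => hmem.2 h2⟩, one_mul]
          · rw [dif_pos ⟨hx1, hx2, h1, hi.1⟩,
              hit_rem M π H Sp Srch q n ⟨i, y⟩ h2
                (fun e => absurd (congrArg Sigma.fst e) (by show ¬ i = q.1; omega)),
              if_neg (fun hc => hc.2 ⟨h1, h2⟩)]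
            simp
        · rw [dif_neg (fun hc => h1 hc.2.2.1), if_neg (fun hc => h1 hc.1)]
          simp
      rw [Finset.sum_congr rfl hFi, hFq]
      rw [decompAP M π (Sp \ Srch) Sp Set.diff_subset x.1 x.2 q.1 hge.le q.2]
      simp [mrpQ, hit_bot]

end claim

/-- Let `M` be a stochastic MDP, `π` a policy, and `Sp`, `Srch` arbitrary
sets of states (all lying in layers `< H`); set `Srem = Sp \ Srch`.  In the
policy-specific Markov reward process `M^π` defined by the kernel `mrpQ` above (with
start state `s_⊤`, absorbing state `s_⊥`, and at most `H + 1` transitions per episode),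
the probability that the process started at `s_⊤` ever visits a state `q ∈ Srem` equals
`d̄^π(q, Srem)`: the probability that a trajectory of `M` under `π` reaches `q` without
having visited any state of `Srem` at any earlier time step. -/
theorem mrp_visit_eq_dbar (H : ℕ) (hH : 1 ≤ H) (S : ℕ → Type) (A : Type)
    [∀ h, Fintype (S h)] (M : StoMDP S A) (π : ∀ h : ℕ, S h → A)
    (Sp Srch : Set ((h : ℕ) × S h)) (hSp : ∀ q ∈ Sp, q.1 < H)
    (q : (h : ℕ) × S h) (hq : q ∈ Sp \ Srch) :
    hitProb (mrpQ H M π Sp Srch) (Sum.inr (Sum.inl q)) (H + 1) (Sum.inl ())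
      = initAvoid M π (Sp \ Srch) q.1 q.2 := by
  obtain ⟨hq1, hq2⟩ := hq
  have hqH : q.1 < H := hSp q hq1
  simp only [hitProb]
  rw [if_neg (by simp)]
  rw [tsum_sum_type, tsum_sum_type, tsum_unit, tsum_unit, ENNReal.tsum_sigma']
  simp only [tsum_fintype]
  rw [tsum_eq_sum (s := Finset.range (q.1 + 1)) ?hsupp]
  case hsupp =>
    intro i hi
    simp only [Finset.mem_range, not_lt] at hi
    refine Finset.sum_eq_zero fun y _ => ?_
    rw [hit_ge M π H Sp Srch q H ⟨i, y⟩ (by show q.1 ≤ i; omega)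
      (fun e => absurd (congrArg Sigma.fst e) (by show ¬ i = q.1; omega)), mul_zero]
  rw [Finset.sum_range_succ]
  have hFq : (∑ y : S q.1,
      mrpQ H M π Sp Srch (Sum.inl ()) (Sum.inr (Sum.inl ⟨q.1, y⟩)) *
        hitProb (mrpQ H M π Sp Srch) (Sum.inr (Sum.inl q)) H (Sum.inr (Sum.inl ⟨q.1, y⟩)))
      = initAvoid M π Sp q.1 q.2 := by
    rw [Finset.sum_eq_single q.2]
    · rw [show (⟨q.1, q.2⟩ : (h : ℕ) × S h) = q from rfl, mrpQ_top, if_pos hq1,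
        hit_tgt, mul_one]
    · intro y _ hy
      rw [hit_ge M π H Sp Srch q H ⟨q.1, y⟩ le_rfl
        (fun e => hy (eq_of_heq (Sigma.mk.inj_iff.mp e).2)), mul_zero]
    · intro hmem; exact absurd (Finset.mem_univ _) hmem
  have hFi : ∀ i ∈ Finset.range q.1, (∑ y : S i,
      mrpQ H M π Sp Srch (Sum.inl ()) (Sum.inr (Sum.inl ⟨i, y⟩)) *
        hitProb (mrpQ H M π Sp Srch) (Sum.inr (Sum.inl q)) H (Sum.inr (Sum.inl ⟨i, y⟩)))
      = ∑ y : S i,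
          (if (⟨i, y⟩ : (j : ℕ) × S j) ∈ Sp ∧ (⟨i, y⟩ : (j : ℕ) × S j) ∉ (Sp \ Srch)
            then 1 else 0) *
            initAvoid M π Sp i y * AP M π (Sp \ Srch) i y q.1 q.2 := by
    intro i hi
    simp only [Finset.mem_range] at hi
    refine Finset.sum_congr rfl fun y _ => ?_
    rw [mrpQ_top]
    by_cases h1 : (⟨i, y⟩ : (j : ℕ) × S j) ∈ Sp
    · by_cases h2 : (⟨i, y⟩ : (j : ℕ) × S j) ∈ Srch
      · rw [if_pos h1,
          hit_claim M π H Sp Srch q hq1 hq2 H ⟨i, y⟩ h1 h2 (by show q.1 ≤ i + H; omega),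
          dif_pos (by show i ≤ q.1; omega : (⟨i, y⟩ : (j : ℕ) × S j).1 ≤ q.1),
          if_pos ⟨h1, fun hm => hm.2 h2⟩, one_mul]
      · rw [if_pos h1,
          hit_rem M π H Sp Srch q H ⟨i, y⟩ h2
            (fun e => absurd (congrArg Sigma.fst e) (by show ¬ i = q.1; omega)),
          if_neg (fun hc => hc.2 ⟨h1, h2⟩)]
        simp
    · rw [if_neg h1, if_neg (fun hc => h1 hc.1)]
      simp
  rw [Finset.sum_congr rfl hFi, hFq]
  rw [decompIA M π (Sp \ Srch) Sp Set.diff_subset q.1 q.2]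
  simp [mrpQ, hit_bot]
  exact add_comm _ _
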